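/- Suppose unit vectors a_1,…,a_m in ℝⁿ satisfy the δ-distance property. For i ≥ 2 let a_i* be the orthogonal projection of a_i onto the orthogonal complement of a_1. Then the nonzero vectors among a_2*,…,a_m*, after rescaling to unit length, also satisfy the δ-distance property. -/

import Mathlib

open RealInnerProductSpace

/-- The δ-distance property of a family of vectors: whenever `a j` is not in the span of
`{a i : i ∈ I}`, its distance to that span is at least `δ`. -/
def DeltaDistanceProperty {ι : Type*} {n : ℕ} (δ : ℝ) (a : ι → EuclideanSpace ℝ (Fin n)) : Prop :=
  ∀ (I : Set ι) (j : ι),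
    a j ∉ Submodule.span ℝ (a '' I) →
    δ ≤ Metric.infDist (a j) (Submodule.span ℝ (a '' I) : Set (EuclideanSpace ℝ (Fin n)))

/-- projecting unit vectors satisfying the δ-distance property onto the
orthogonal complement of the first vector, and rescaling the nonzero projections to unit
length, again yields a family with the δ-distance property. -/
theorem stmt2 (m n : ℕ) (δ : ℝ) (hδ : 0 < δ)
    (a : Fin (m+1) → EuclideanSpace ℝ (Fin n))
    (hunit : ∀ i, ‖a i‖ = 1)
    (hdist : DeltaDistanceProperty δ a)
    (astar : Fin (m+1) → EuclideanSpace ℝ (Fin n))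
    (hastar : ∀ i, astar i =
      (Submodule.orthogonalProjectionOnto ((ℝ ∙ a 0)ᗮ) (a i) : EuclideanSpace ℝ (Fin n))) :
    DeltaDistanceProperty δ
      (fun i : {i : Fin (m+1) // i ≠ 0 ∧ astar i ≠ 0} => (‖astar i.1‖)⁻¹ • astar i.1) := by
  classical
  intro I j hj
  set b : {i : Fin (m+1) // i ≠ 0 ∧ astar i ≠ 0} → EuclideanSpace ℝ (Fin n) :=
    fun i => (‖astar i.1‖)⁻¹ • astar i.1 with hbdef
  set L : Submodule ℝ (EuclideanSpace ℝ (Fin n)) := ℝ ∙ a 0 with hLdef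
  set S : Submodule ℝ (EuclideanSpace ℝ (Fin n)) := Submodule.span ℝ (b '' I) with hSdef
  have hKmem : ∀ i, astar i ∈ Lᗮ := fun i => by
    rw [hastar]; exact Submodule.coe_mem _
  have hdiffmem : ∀ i, a i - astar i ∈ L := fun i => by
    rw [hastar]
    have h := Submodule.sub_starProjection_mem_orthogonal (K := Lᗮ) (a i)
    rwa [Submodule.orthogonal_orthogonal] at h
  have hnormle : ∀ i, ‖astar i‖ ≤ 1 := fun i => by
    rw [hastar]
    calc ‖(Submodule.orthogonalProjectionOnto Lᗮ (a i) : EuclideanSpace ℝ (Fin n))‖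
        ≤ 1 * ‖a i‖ := (Submodule.orthogonalProjectionOnto Lᗮ).le_of_opNorm_le (Submodule.orthogonalProjectionOnto_norm_le Lᗮ) _
      _ = 1 := by rw [one_mul, hunit]
  -- S ⊆ Lᗮ
  have hSle : S ≤ Lᗮ := by
    rw [hSdef, Submodule.span_le]
    rintro x ⟨i, _, rfl⟩
    exact Submodule.smul_mem _ _ (hKmem i.1)
  -- the big span
  set I' : Set (Fin (m+1)) := insert 0 (Subtype.val '' I) with hI'def
  set T : Submodule ℝ (EuclideanSpace ℝ (Fin n)) := Submodule.span ℝ (a '' I') with hTdef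
  have ha0T : a 0 ∈ T := Submodule.subset_span ⟨0, Or.inl rfl, rfl⟩
  have hLT : L ≤ T := by
    rw [hLdef, Submodule.span_le, Set.singleton_subset_iff]; exact ha0T
  have hST : S ≤ T := by
    rw [hSdef, Submodule.span_le]
    rintro x ⟨i, hiI, rfl⟩
    have hai : a i.1 ∈ T := Submodule.subset_span ⟨i.1, Or.inr ⟨i, hiI, rfl⟩, rfl⟩
    have hstar : astar i.1 ∈ T := by
      have := T.sub_mem hai (hLT (hdiffmem i.1))
      simpa using this
    exact Submodule.smul_mem _ _ hstar
  have hTle : T ≤ L ⊔ S := by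
    rw [hTdef, Submodule.span_le]
    rintro x ⟨k, hk, rfl⟩
    rcases hk with rfl | ⟨i, hiI, rfl⟩
    · exact Submodule.mem_sup_left (Submodule.mem_span_singleton_self _)
    · have hbS : b i ∈ S := Submodule.subset_span ⟨i, hiI, rfl⟩
      have hstarS : astar i.1 ∈ S := by
        have := S.smul_mem (‖astar i.1‖) hbS
        rwa [hbdef, smul_smul, mul_inv_cancel₀ (norm_ne_zero_iff.mpr i.2.2), one_smul] at this
      have : a i.1 = (a i.1 - astar i.1) + astar i.1 := by abel
      rw [this]
      exact Submodule.add_mem _ (Submodule.mem_sup_left (hdiffmem i.1))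
        (Submodule.mem_sup_right hstarS)
  -- a j ∉ T
  have hcj : (0:ℝ) < ‖astar j.1‖ := norm_pos_iff.mpr j.2.2
  have hajT : a j.1 ∉ T := by
    intro haj
    have hstarT : astar j.1 ∈ L ⊔ S := by
      have := T.sub_mem haj (hLT (hdiffmem j.1))
      exact hTle (by simpa using this)
    rcases Submodule.mem_sup.mp hstarT with ⟨y, hy, z, hz, hyz⟩
    have hyperp : y ∈ Lᗮ := by
      have : y = astar j.1 - z := by rw [← hyz]; abel
      rw [this]
      exact Submodule.sub_mem _ (hKmem j.1) (hSle hz)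
    have hy0 : y = 0 := by
      have := Submodule.orthogonal_disjoint L
      exact (Submodule.disjoint_def.mp this) y hy hyperp
    have hstarS : astar j.1 ∈ S := by rw [← hyz, hy0, zero_add]; exact hz
    exact hj (Submodule.smul_mem _ _ hstarS)
  have hδT := hdist I' j.1 hajT
  -- conclude
  have hSne : (S : Set (EuclideanSpace ℝ (Fin n))).Nonempty := ⟨0, S.zero_mem⟩
  refine le_of_not_gt fun hlt => ?_
  obtain ⟨s, hs, hds⟩ := (Metric.infDist_lt_iff hSne).mp hlt
  refine absurd hds (not_lt.mpr ?_)
  have hsS : s ∈ S := hs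
  have hw : (‖astar j.1‖ • s + (a j.1 - astar j.1)) ∈ T :=
    T.add_mem (hST (S.smul_mem _ hsS)) (hLT (hdiffmem j.1))
  have hkey : δ ≤ ‖astar j.1 - ‖astar j.1‖ • s‖ := by
    have h1 : δ ≤ dist (a j.1) (‖astar j.1‖ • s + (a j.1 - astar j.1)) :=
      le_trans hδT (Metric.infDist_le_dist_of_mem hw)
    rwa [dist_eq_norm, show a j.1 - (‖astar j.1‖ • s + (a j.1 - astar j.1))
      = astar j.1 - ‖astar j.1‖ • s by abel] at h1
  have hfactor : dist (b j) s = ‖astar j.1‖⁻¹ * ‖astar j.1 - ‖astar j.1‖ • s‖ := by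
    have heq : b j - s = ‖astar j.1‖⁻¹ • (astar j.1 - ‖astar j.1‖ • s) := by
      rw [smul_sub, smul_smul, inv_mul_cancel₀ (ne_of_gt hcj), one_smul]
    rw [dist_eq_norm, heq, norm_smul, Real.norm_eq_abs, abs_of_pos (inv_pos.mpr hcj)]
  rw [hfactor]
  have hinv : (1:ℝ) ≤ ‖astar j.1‖⁻¹ := (one_le_inv₀ hcj).mpr (hnormle j.1)
  calc δ = 1 * δ := (one_mul δ).symm
    _ ≤ ‖astar j.1‖⁻¹ * ‖astar j.1 - ‖astar j.1‖ • s‖ :=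
        mul_le_mul hinv hkey (le_of_lt hδ) (le_trans zero_le_one hinv)
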